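/- Reversal symmetry of w_{𝔰𝔬(N)}: for every N, every m, and every permutation s of Fin m, one has w_{𝔰𝔬(N)}(s⁻¹) = (−1)^m · w_{𝔰𝔬(N)}(s) in U(𝔰𝔬(N)). -/

import Mathlib

open Matrix in
noncomputable section
open Matrix

attribute [local instance 100] LieRing.ofAssociativeRing

/-- The anti-diagonal identity matrix. -/
def soJ (N : ℕ) : Matrix (Fin N) (Fin N) ℂ := fun i j => if j = Fin.rev i then 1 else 0

lemma soJ_mul (N : ℕ) (A : Matrix (Fin N) (Fin N) ℂ) (i j : Fin N) :
    (soJ N * A) i j = A (Fin.rev i) j := by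
  simp [soJ, Matrix.mul_apply, Fin.rev_eq_iff]

lemma mul_soJ (N : ℕ) (A : Matrix (Fin N) (Fin N) ℂ) (i j : Fin N) :
    (A * soJ N) i j = A i (Fin.rev j) := by
  classical
  simp only [Matrix.mul_apply, soJ]
  rw [Finset.sum_eq_single (Fin.rev j)]
  · simp
  · intro b _ hb
    rw [if_neg, mul_zero]
    intro h
    exact hb (by rw [h, Fin.rev_rev])
  · simp

/-- The Lie algebra 𝔰𝔬(N). -/
def soL (N : ℕ) : LieSubalgebra ℂ (Matrix (Fin N) (Fin N) ℂ) where
  carrier := {A | Aᵀ * soJ N = -(soJ N * A)}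
  add_mem' := by
    intro A B hA hB
    simp only [Set.mem_setOf_eq] at *
    rw [Matrix.transpose_add, Matrix.add_mul, hA, hB, Matrix.mul_add, neg_add]
  zero_mem' := by
    simp [Set.mem_setOf_eq]
  smul_mem' := by
    intro c A hA
    simp only [Set.mem_setOf_eq] at *
    rw [Matrix.transpose_smul, Matrix.smul_mul, hA, Matrix.mul_smul, smul_neg]
  lie_mem' := by
    intro A B hA hB
    simp only [Set.mem_setOf_eq] at *
    rw [Ring.lie_def, Matrix.transpose_sub, Matrix.transpose_mul, Matrix.transpose_mul,
      Matrix.sub_mul, Matrix.mul_assoc, Matrix.mul_assoc, hA, hB, Matrix.mul_neg,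
      Matrix.mul_neg, ← Matrix.mul_assoc, ← Matrix.mul_assoc, hA, hB, Matrix.neg_mul,
      Matrix.neg_mul, neg_neg, neg_neg, Matrix.mul_sub, Matrix.mul_assoc, Matrix.mul_assoc]
    abel

/-- The generators X_{ab} of 𝔰𝔬(N), as matrices. -/
def soXmat (N : ℕ) (a b : Fin N) : Matrix (Fin N) (Fin N) ℂ :=
  Matrix.single a b 1 - Matrix.single (Fin.rev b) (Fin.rev a) 1

lemma soXmat_mem (N : ℕ) (a b : Fin N) : soXmat N a b ∈ soL N := by
  change (soXmat N a b)ᵀ * soJ N = -(soJ N * soXmat N a b)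
  ext i j
  rw [mul_soJ]
  simp only [Matrix.neg_apply, soJ_mul, soXmat, Matrix.sub_apply, Matrix.transpose_apply,
    Matrix.single, Matrix.of_apply]
  simp only [Fin.rev_inj, Fin.rev_eq_iff, neg_sub]
  simp [and_comm]

/-- The generators of 𝔰𝔬(N) as elements of the Lie algebra. -/
def soX (N : ℕ) (a b : Fin N) : soL N := ⟨soXmat N a b, soXmat_mem N a b⟩

/-- The extension of the 𝔰𝔬(N) weight system to permutations. -/
def wso (N : ℕ) {m : ℕ} (s : Equiv.Perm (Fin m)) :
    UniversalEnvelopingAlgebra ℂ ↥(soL N) :=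
  ∑ i : Fin m → Fin N,
    (List.ofFn fun k : Fin m =>
      UniversalEnvelopingAlgebra.ι ℂ (soX N (i k) (i (s k)))).prod

lemma soX_rev (N : ℕ) (a b : Fin N) : soX N (Fin.rev b) (Fin.rev a) = - soX N a b := by
  apply Subtype.ext
  show soXmat N (Fin.rev b) (Fin.rev a) = -(soXmat N a b)
  simp only [soXmat, Fin.rev_rev, neg_sub]

lemma prod_neg_list {A : Type*} [Ring A] [Algebra ℂ A] (l : List A) :
    (l.map fun x => -x).prod = ((-1 : ℂ) ^ l.length) • l.prod := by
  induction l with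
  | nil => simp
  | cons x l ih =>
    simp only [List.map_cons, List.prod_cons, List.length_cons, ih]
    rw [neg_mul, mul_smul_comm, pow_succ, mul_neg_one, neg_smul]

set_option synthInstance.maxHeartbeats 1000000 in
/-- Reversal symmetry of w_{𝔰𝔬(N)}: w(s⁻¹) = (-1)^m · w(s). -/
theorem wso_inv (N m : ℕ) (s : Equiv.Perm (Fin m)) :
    wso N s⁻¹ = ((-1 : ℂ) ^ m) • wso N s := by
  classical
  let e : (Fin m → Fin N) ≃ (Fin m → Fin N) :=
  { toFun := fun i k => Fin.rev (i (s k))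
    invFun := fun j k => Fin.rev (j (s⁻¹ k))
    left_inv := by intro i; funext k; simp [Fin.rev_rev]
    right_inv := by intro j; funext k; simp [Fin.rev_rev] }
  rw [wso, wso, Finset.smul_sum]
  rw [← Equiv.sum_comp e (fun i => (List.ofFn fun k =>
      UniversalEnvelopingAlgebra.ι ℂ (soX N (i k) (i (s⁻¹ k)))).prod)]
  apply Finset.sum_congr rfl
  intro i _
  have h1 : ∀ k : Fin m,
      soX N (e i k) (e i (s⁻¹ k)) = - soX N (i k) (i (s k)) := by
    intro k
    show soX N (Fin.rev (i (s k))) (Fin.rev (i (s (s⁻¹ k)))) = _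
    rw [Equiv.Perm.coe_inv, Equiv.apply_symm_apply]
    exact soX_rev N (i k) (i (s k))
  have h2 : (List.ofFn fun k =>
      UniversalEnvelopingAlgebra.ι ℂ (soX N (e i k) (e i (s⁻¹ k)))) =
      (List.ofFn fun k =>
        UniversalEnvelopingAlgebra.ι ℂ (soX N (i k) (i (s k)))).map fun x => -x := by
    rw [List.map_ofFn]
    congr 1
    funext k
    rw [h1 k]
    simp
  rw [h2, prod_neg_list, List.length_ofFn]

end
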